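/- Let C be a connected coalgebra, A a unital algebra with a linear decomposition A = A_1 ⊕ A_2 where 1_A ∈ A_1, and P the projection onto A_1 along A_2. For φ ∈ G(C,A), the maps φ_1, φ_2 defined recursively on Ker ε by φ_1(x) = -P(φ(x) + Σ φ_1(x')φ(x'')) and φ_2(x) = (id - P)(φ(x) + Σ φ_1(x')φ(x'')) (with Δ̄x = Σ x'⊗x'') satisfy φ_i(Ker ε) ⊆ A_i and φ = φ_1^{∗(-1)} ∗ φ_2; moreover φ_1, φ_2 are the unique elements of G(C,A) with these containment properties satisfying this factorization. -/

import Mathlib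

open TensorProduct

/-- The convolution product `φ∗ψ = m_A ∘ (φ ⊗ ψ) ∘ Δ_C`. -/
noncomputable def conv {C A : Type*} [AddCommMonoid C] [Module ℝ C] [Coalgebra ℝ C]
    [Ring A] [Algebra ℝ A] (φ ψ : C →ₗ[ℝ] A) : C →ₗ[ℝ] A :=
  LinearMap.mul' ℝ A ∘ₗ TensorProduct.map φ ψ ∘ₗ Coalgebra.comul (R := ℝ)

/-- The convolution unit `e = u_A ∘ ε_C`. -/
noncomputable def convUnit (C A : Type*) [AddCommMonoid C] [Module ℝ C] [Coalgebra ℝ C]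
    [Ring A] [Algebra ℝ A] : C →ₗ[ℝ] A :=
  Algebra.linearMap ℝ A ∘ₗ Coalgebra.counit (R := ℝ)

set_option linter.unusedSectionVars false

namespace BirkhoffAux

variable {C A : Type*} [AddCommGroup C] [Module ℝ C] [Coalgebra ℝ C]
  [Ring A] [Algebra ℝ A]

lemma conv_apply (f g : C →ₗ[ℝ] A) (x : C) :
    conv f g x = LinearMap.mul' ℝ A (TensorProduct.map f g (Coalgebra.comul (R := ℝ) x)) := rfl

lemma map_sub_left (f f' g : C →ₗ[ℝ] A) :
    TensorProduct.map (f - f') g = TensorProduct.map f g - TensorProduct.map f' g :=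
  TensorProduct.ext' fun a b => by simp [sub_tmul]

lemma map_sub_right (f g g' : C →ₗ[ℝ] A) :
    TensorProduct.map f (g - g') = TensorProduct.map f g - TensorProduct.map f g' :=
  TensorProduct.ext' fun a b => by simp [tmul_sub]

lemma map_add_left' (f f' g : C →ₗ[ℝ] A) :
    TensorProduct.map (f + f') g = TensorProduct.map f g + TensorProduct.map f' g :=
  TensorProduct.ext' fun a b => by simp [add_tmul]

lemma map_add_right' (f g g' : C →ₗ[ℝ] A) :
    TensorProduct.map f (g + g') = TensorProduct.map f g + TensorProduct.map f g' :=
  TensorProduct.ext' fun a b => by simp [tmul_add]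

lemma conv_sub_left (f f' g : C →ₗ[ℝ] A) : conv (f - f') g = conv f g - conv f' g := by
  ext x; simp [conv_apply, map_sub_left]

lemma conv_sub_right (f g g' : C →ₗ[ℝ] A) : conv f (g - g') = conv f g - conv f g' := by
  ext x; simp [conv_apply, map_sub_right]

lemma conv_add_left (f f' g : C →ₗ[ℝ] A) : conv (f + f') g = conv f g + conv f' g := by
  ext x; simp [conv_apply, map_add_left']

lemma conv_add_right (f g g' : C →ₗ[ℝ] A) : conv f (g + g') = conv f g + conv f g' := by
  ext x; simp [conv_apply, map_add_right']


lemma conv_unit_left (g : C →ₗ[ℝ] A) : conv (convUnit C A) g = g := by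
  ext x
  have h1 : TensorProduct.map (Algebra.linearMap ℝ A ∘ₗ Coalgebra.counit (R := ℝ) (A := C)) g
      = TensorProduct.map (Algebra.linearMap ℝ A) g ∘ₗ
        LinearMap.rTensor C (Coalgebra.counit (R := ℝ) (A := C)) := by
    have := TensorProduct.map_comp (Algebra.linearMap ℝ A) g
      (Coalgebra.counit (R := ℝ) (A := C)) (LinearMap.id (R := ℝ) (M := C))
    simp only [LinearMap.comp_id] at this
    exact this
  simp only [conv_apply, convUnit, h1, LinearMap.comp_apply]
  rw [Coalgebra.rTensor_counit_comul]
  simp [Algebra.linearMap_apply, LinearMap.mul'_apply]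

lemma conv_unit_right (g : C →ₗ[ℝ] A) : conv g (convUnit C A) = g := by
  ext x
  have h1 : TensorProduct.map g (Algebra.linearMap ℝ A ∘ₗ Coalgebra.counit (R := ℝ) (A := C))
      = TensorProduct.map g (Algebra.linearMap ℝ A) ∘ₗ
        LinearMap.lTensor C (Coalgebra.counit (R := ℝ) (A := C)) := by
    have := TensorProduct.map_comp g (Algebra.linearMap ℝ A)
      (LinearMap.id (R := ℝ) (M := C)) (Coalgebra.counit (R := ℝ) (A := C))
    simp only [LinearMap.comp_id] at this
    exact this
  simp only [conv_apply, convUnit, h1, LinearMap.comp_apply]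
  rw [Coalgebra.lTensor_counit_comul]
  simp [Algebra.linearMap_apply, LinearMap.mul'_apply]

lemma conv_assoc (f g h : C →ₗ[ℝ] A) : conv (conv f g) h = conv f (conv g h) := by
  have h1 : TensorProduct.map (conv f g) h
      = TensorProduct.map (LinearMap.mul' ℝ A) LinearMap.id ∘ₗ
        (TensorProduct.map (TensorProduct.map f g) h ∘ₗ
          TensorProduct.map (Coalgebra.comul (R := ℝ)) LinearMap.id) := by
    rw [← TensorProduct.map_comp, ← TensorProduct.map_comp]
    simp only [LinearMap.id_comp, LinearMap.comp_id]
    rfl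
  have h2 : TensorProduct.map f (conv g h)
      = TensorProduct.map LinearMap.id (LinearMap.mul' ℝ A) ∘ₗ
        (TensorProduct.map f (TensorProduct.map g h) ∘ₗ
          TensorProduct.map LinearMap.id (Coalgebra.comul (R := ℝ))) := by
    rw [← TensorProduct.map_comp, ← TensorProduct.map_comp]
    simp only [LinearMap.id_comp, LinearMap.comp_id]
    rfl
  have hM : (LinearMap.mul' ℝ A ∘ₗ TensorProduct.map (LinearMap.mul' ℝ A) LinearMap.id ∘ₗ
        TensorProduct.map (TensorProduct.map f g) h)
      = (LinearMap.mul' ℝ A ∘ₗ TensorProduct.map LinearMap.id (LinearMap.mul' ℝ A) ∘ₗ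
        TensorProduct.map f (TensorProduct.map g h)) ∘ₗ
        (TensorProduct.assoc ℝ C C C).toLinearMap := by
    apply TensorProduct.ext_threefold
    intro x y z
    simp [LinearMap.mul'_apply, mul_assoc]
  ext x
  have hco : TensorProduct.map (Coalgebra.comul (R := ℝ)) LinearMap.id
        ((Coalgebra.comul (R := ℝ)) x)
      = (TensorProduct.assoc ℝ C C C).symm
        (TensorProduct.map LinearMap.id (Coalgebra.comul (R := ℝ))
          ((Coalgebra.comul (R := ℝ)) x)) := by
    have := Coalgebra.coassoc_symm_apply (R := ℝ) (x : C)
    exact this.symm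
  have hMx := LinearMap.congr_fun hM ((TensorProduct.assoc ℝ C C C).symm
    (TensorProduct.map LinearMap.id (Coalgebra.comul (R := ℝ)) ((Coalgebra.comul (R := ℝ)) x)))
  simp only [LinearMap.comp_apply, LinearEquiv.coe_coe, LinearEquiv.apply_symm_apply] at hMx
  rw [conv_apply (conv f g) h, conv_apply f (conv g h), h1, h2]
  simp only [LinearMap.comp_apply]
  rw [hco]
  exact hMx

lemma conv_expand (one : C) (f g : C →ₗ[ℝ] A) (x : C) :
    conv f g x = LinearMap.mul' ℝ A (TensorProduct.map f g
        (Coalgebra.comul (R := ℝ) x - (one ⊗ₜ[ℝ] x + x ⊗ₜ[ℝ] one)))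
      + (f one * g x + f x * g one) := by
  rw [conv_apply, map_sub, map_add]
  simp only [map_sub, map_add, TensorProduct.map_tmul, LinearMap.mul'_apply]
  abel

lemma conv_one_apply {one : C} (hone_c : Coalgebra.comul (R := ℝ) one = one ⊗ₜ[ℝ] one)
    (f g : C →ₗ[ℝ] A) : conv f g one = f one * g one := by
  rw [conv_apply, hone_c, TensorProduct.map_tmul, LinearMap.mul'_apply]

lemma mulmap_zero_left {F : ℕ → Submodule ℝ C} {n : ℕ} {f g : C →ₗ[ℝ] A}
    (hf : ∀ y ∈ F n, f y = 0) {t : C ⊗[ℝ] C}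
    (ht : t ∈ LinearMap.range (TensorProduct.map (F n).subtype (F n).subtype)) :
    LinearMap.mul' ℝ A (TensorProduct.map f g t) = 0 := by
  obtain ⟨s, rfl⟩ := ht
  have h2 : TensorProduct.map f g (TensorProduct.map (F n).subtype (F n).subtype s)
      = TensorProduct.map (f ∘ₗ (F n).subtype) (g ∘ₗ (F n).subtype) s := by
    rw [TensorProduct.map_comp]; rfl
  rw [h2]
  have hfz : f ∘ₗ (F n).subtype = 0 := LinearMap.ext fun y => hf y y.2
  have : TensorProduct.map (f ∘ₗ (F n).subtype) (g ∘ₗ (F n).subtype)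
      = (0 : (F n) ⊗[ℝ] (F n) →ₗ[ℝ] A ⊗[ℝ] A) := by
    rw [hfz]; exact TensorProduct.ext' fun a b => by simp
  rw [this]; simp

lemma mulmap_zero_right {F : ℕ → Submodule ℝ C} {n : ℕ} {f g : C →ₗ[ℝ] A}
    (hg : ∀ y ∈ F n, g y = 0) {t : C ⊗[ℝ] C}
    (ht : t ∈ LinearMap.range (TensorProduct.map (F n).subtype (F n).subtype)) :
    LinearMap.mul' ℝ A (TensorProduct.map f g t) = 0 := by
  obtain ⟨s, rfl⟩ := ht
  have h2 : TensorProduct.map f g (TensorProduct.map (F n).subtype (F n).subtype s)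
      = TensorProduct.map (f ∘ₗ (F n).subtype) (g ∘ₗ (F n).subtype) s := by
    rw [TensorProduct.map_comp]; rfl
  rw [h2]
  have hgz : g ∘ₗ (F n).subtype = 0 := LinearMap.ext fun y => hg y y.2
  have : TensorProduct.map (f ∘ₗ (F n).subtype) (g ∘ₗ (F n).subtype)
      = (0 : (F n) ⊗[ℝ] (F n) →ₗ[ℝ] A ⊗[ℝ] A) := by
    rw [hgz]; exact TensorProduct.ext' fun a b => by simp
  rw [this]; simp

section Glue

variable (F : ℕ → Submodule ℝ C)

lemma memF (hmono : Monotone F) (hexh : (⨆ n, F n) = ⊤) (x : C) : ∃ n, x ∈ F n := by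
  have h : x ∈ (⊤ : Submodule ℝ C) := trivial
  rw [← hexh] at h
  exact (Submodule.mem_iSup_of_chain ⟨F, hmono⟩ x).mp h

variable (hmono : Monotone F) (hexh : (⨆ n, F n) = ⊤)
variable (g : ℕ → (C →ₗ[ℝ] A)) (hg : ∀ n, ∀ x ∈ F n, g (n + 1) x = g n x)

include hmono hg in
lemma glue_compat : ∀ n m, n ≤ m → ∀ x ∈ F n, g m x = g n x := by
  intro n m h
  induction m, h using Nat.le_induction with
  | base => intro x _; rfl
  | succ m hm ih =>
    intro x hx
    rw [hg m x (hmono hm hx), ih x hx]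

include hmono hexh hg in
private lemma glue_key (x : C) (n : ℕ) (hx : x ∈ F n) :
    g (memF F hmono hexh x).choose x = g n x := by
  have hk : x ∈ F (memF F hmono hexh x).choose := (memF F hmono hexh x).choose_spec
  set k := (memF F hmono hexh x).choose with hkdef
  calc g k x = g (max k n) x :=
        (glue_compat F hmono g hg k (max k n) (le_max_left _ _) x hk).symm
    _ = g n x := glue_compat F hmono g hg n (max k n) (le_max_right _ _) x hx

include hmono hexh hg in
noncomputable def glue : C →ₗ[ℝ] A where
  toFun x := g (memF F hmono hexh x).choose x
  map_add' x y := by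
    obtain ⟨nx, hnx⟩ := memF F hmono hexh x
    obtain ⟨ny, hny⟩ := memF F hmono hexh y
    have hx : x ∈ F (max nx ny) := hmono (le_max_left _ _) hnx
    have hy : y ∈ F (max nx ny) := hmono (le_max_right _ _) hny
    rw [glue_key F hmono hexh g hg (x + y) (max nx ny) (add_mem hx hy),
      glue_key F hmono hexh g hg x (max nx ny) hx,
      glue_key F hmono hexh g hg y (max nx ny) hy, map_add]
  map_smul' c x := by
    obtain ⟨nx, hnx⟩ := memF F hmono hexh x
    rw [glue_key F hmono hexh g hg (c • x) nx (Submodule.smul_mem _ c hnx),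
      glue_key F hmono hexh g hg x nx hnx, map_smul]
    rfl

include hmono hexh hg in
lemma glue_eq (n : ℕ) (x : C) (hx : x ∈ F n) : glue F hmono hexh g hg x = g n x :=
  glue_key F hmono hexh g hg x n hx

end Glue

/-- iterated sequence -/
noncomputable def iter (E0 : C →ₗ[ℝ] A) (T : (C →ₗ[ℝ] A) → (C →ₗ[ℝ] A)) : ℕ → (C →ₗ[ℝ] A)
  | 0 => E0
  | n + 1 => T (iter E0 T n)

@[simp] lemma iter_zero (E0 : C →ₗ[ℝ] A) (T : (C →ₗ[ℝ] A) → (C →ₗ[ℝ] A)) :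
    iter E0 T 0 = E0 := rfl

@[simp] lemma iter_succ (E0 : C →ₗ[ℝ] A) (T : (C →ₗ[ℝ] A) → (C →ₗ[ℝ] A)) (n : ℕ) :
    iter E0 T (n + 1) = T (iter E0 T n) := rfl

end BirkhoffAux

open BirkhoffAux in
/-- Algebraic Birkhoff factorization on a connected (conilpotent) coalgebra `C` with
values in a unital algebra `A = A₁ ⊕ A₂`, `1 ∈ A₁`, with projection `P` onto `A₁`
along `A₂`. Every `φ ∈ G(C,A)` factorizes as `φ = φ₁^{∗(-1)} ∗ φ₂` where `φ₁, φ₂`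
satisfy on `Ker ε` the recursions
`φ₁(x) = -P(φ(x) + ∑ φ₁(x')φ(x''))`, `φ₂(x) = (id - P)(φ(x) + ∑ φ₁(x')φ(x''))`
(sum over the reduced coproduct `Δ̄x = Δx - (1⊗x + x⊗1)`), take values in `A₁`, `A₂`
respectively on `Ker ε`; moreover `φ₁, φ₂` are the unique such elements of `G(C,A)`. -/
theorem stmt_17 {C A : Type*} [AddCommGroup C] [Module ℝ C] [Coalgebra ℝ C]
    [Ring A] [Algebra ℝ A]
    (one : C)
    (hone_c : Coalgebra.comul (R := ℝ) one = one ⊗ₜ[ℝ] one)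
    (hone_e : Coalgebra.counit (R := ℝ) one = 1)
    (F : ℕ → Submodule ℝ C) (hmono : Monotone F)
    (hF0 : F 0 = Submodule.span ℝ {one})
    (hexh : (⨆ n, F n) = ⊤)
    (hconil : ∀ n : ℕ, ∀ x ∈ F (n + 1),
      Coalgebra.comul (R := ℝ) x - (one ⊗ₜ[ℝ] x + x ⊗ₜ[ℝ] one) ∈
        LinearMap.range (TensorProduct.map (F n).subtype (F n).subtype))
    (A1 A2 : Submodule ℝ A) (hcompl : IsCompl A1 A2) (h1A : (1 : A) ∈ A1)
    (P : A →ₗ[ℝ] A) (hP1 : ∀ a ∈ A1, P a = a) (hP2 : ∀ a ∈ A2, P a = 0)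
    (φ : C →ₗ[ℝ] A) (hφ : φ one = 1) :
    ∃ φ1 φ2 : C →ₗ[ℝ] A,
      φ1 one = 1 ∧ φ2 one = 1 ∧
      (∀ x : C, Coalgebra.counit (R := ℝ) x = 0 →
        φ1 x = -P (φ x + LinearMap.mul' ℝ A (TensorProduct.map φ1 φ
          (Coalgebra.comul (R := ℝ) x - (one ⊗ₜ[ℝ] x + x ⊗ₜ[ℝ] one))))) ∧
      (∀ x : C, Coalgebra.counit (R := ℝ) x = 0 →
        φ2 x = (φ x + LinearMap.mul' ℝ A (TensorProduct.map φ1 φ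
            (Coalgebra.comul (R := ℝ) x - (one ⊗ₜ[ℝ] x + x ⊗ₜ[ℝ] one)))) -
          P (φ x + LinearMap.mul' ℝ A (TensorProduct.map φ1 φ
            (Coalgebra.comul (R := ℝ) x - (one ⊗ₜ[ℝ] x + x ⊗ₜ[ℝ] one))))) ∧
      (∀ x : C, Coalgebra.counit (R := ℝ) x = 0 → φ1 x ∈ A1 ∧ φ2 x ∈ A2) ∧
      (∃ φ1inv : C →ₗ[ℝ] A, conv φ1 φ1inv = convUnit C A ∧
        conv φ1inv φ1 = convUnit C A ∧ φ = conv φ1inv φ2) ∧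
      (∀ ψ1 ψ2 : C →ₗ[ℝ] A, ψ1 one = 1 → ψ2 one = 1 →
        (∀ x : C, Coalgebra.counit (R := ℝ) x = 0 → ψ1 x ∈ A1 ∧ ψ2 x ∈ A2) →
        (∃ ψ1inv : C →ₗ[ℝ] A, conv ψ1 ψ1inv = convUnit C A ∧
          conv ψ1inv ψ1 = convUnit C A ∧ φ = conv ψ1inv ψ2) →
        ψ1 = φ1 ∧ ψ2 = φ2) := by
  classical
  set E := convUnit C A with hE
  have hone0 : one ∈ F 0 := by rw [hF0]; exact Submodule.mem_span_singleton_self one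
  have honeN : ∀ n, one ∈ F n := fun n => hmono (Nat.zero_le n) hone0
  have hEone : E one = 1 := by simp [hE, convUnit, hone_e]
  have hEker : ∀ x : C, Coalgebra.counit (R := ℝ) x = 0 → E x = 0 := by
    intro x hx; simp [hE, convUnit, hx]
  have hφe_one : (φ - E) one = 0 := by simp [hφ, hEone]
  have hmemF : ∀ x : C, ∃ n, x ∈ F n := memF F hmono hexh
  have hF0elt : ∀ x ∈ F 0, ∃ c : ℝ, x = c • one := by
    intro x hx; rw [hF0] at hx
    obtain ⟨c, hc⟩ := Submodule.mem_span_singleton.mp hx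
    exact ⟨c, hc.symm⟩
  have hconv0L : ∀ (f g' : C →ₗ[ℝ] A), f one = 0 → g' one = 0 →
      ∀ n, (∀ y ∈ F n, f y = 0) → ∀ x ∈ F (n + 1), conv f g' x = 0 := by
    intro f g' hf1 hg1 n hfv x hx
    rw [conv_expand one f g' x, mulmap_zero_left hfv (hconil n x hx), hf1, hg1]
    simp
  have hconv0R : ∀ (f g' : C →ₗ[ℝ] A), f one = 0 → g' one = 0 →
      ∀ n, (∀ y ∈ F n, g' y = 0) → ∀ x ∈ F (n + 1), conv f g' x = 0 := by
    intro f g' hf1 hg1 n hgv x hx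
    rw [conv_expand one f g' x, mulmap_zero_right hgv (hconil n x hx), hf1, hg1]
    simp
  -- the sequence defining φ1
  set S : ℕ → (C →ₗ[ℝ] A) := iter E (fun ψ => E - (P ∘ₗ conv ψ (φ - E))) with hSdef
  have hSsucc : ∀ n, S (n + 1) = E - (P ∘ₗ conv (S n) (φ - E)) := fun n => rfl
  have hS0 : S 0 = E := rfl
  have hSone : ∀ n, S n one = 1 := by
    intro n; induction n with
    | zero => exact hEone
    | succ n ih =>
      rw [hSsucc]
      simp only [LinearMap.sub_apply, LinearMap.comp_apply]
      rw [conv_one_apply hone_c, ih, hφe_one, mul_zero, map_zero, hEone, sub_zero]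
  have hSstab : ∀ n, ∀ x ∈ F n, S (n + 1) x = S n x := by
    intro n
    induction n with
    | zero =>
      intro x hx
      obtain ⟨c, rfl⟩ := hF0elt x hx
      rw [map_smul, map_smul, hSone 1, hSone 0]
    | succ n ih =>
      intro x hx
      have hD1 : (S (n + 1) - S n) one = 0 := by simp [hSone]
      have hDv : ∀ y ∈ F n, (S (n + 1) - S n) y = 0 := by
        intro y hy; simp [ih y hy]
      have h0 := hconv0L (S (n + 1) - S n) (φ - E) hD1 hφe_one n hDv x hx
      rw [conv_sub_left] at h0
      have h0' : conv (S (n + 1)) (φ - E) x = conv (S n) (φ - E) x :=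
        sub_eq_zero.mp (by simpa using h0)
      calc S (n + 1 + 1) x = E x - P (conv (S (n + 1)) (φ - E) x) := by
            rw [hSsucc (n + 1)]; simp only [LinearMap.sub_apply, LinearMap.comp_apply]
        _ = E x - P (conv (S n) (φ - E) x) := by rw [h0']
        _ = S (n + 1) x := by
            rw [hSsucc n]; simp only [LinearMap.sub_apply, LinearMap.comp_apply]
  set φ1 : C →ₗ[ℝ] A := glue F hmono hexh S hSstab with hφ1def
  have hφ1eq : ∀ n, ∀ x ∈ F n, φ1 x = S n x := fun n x hx =>
    glue_eq F hmono hexh S hSstab n x hx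
  have hφ1one : φ1 one = 1 := by rw [hφ1eq 0 one hone0]; exact hSone 0
  have hφ1fix : ∀ x : C, φ1 x = E x - P (conv φ1 (φ - E) x) := by
    intro x
    obtain ⟨n, hn⟩ := hmemF x
    have h1 : φ1 x = S (n + 1) x := by rw [hSstab n x hn]; exact hφ1eq n x hn
    rw [h1, hSsucc]
    simp only [LinearMap.sub_apply, LinearMap.comp_apply]
    have hD1 : (φ1 - S n) one = 0 := by
      simp [LinearMap.sub_apply, hφ1one, hSone]
    have hDv : ∀ y ∈ F n, (φ1 - S n) y = 0 := fun y hy => by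
      simp [LinearMap.sub_apply, hφ1eq n y hy]
    have h0 := hconv0L (φ1 - S n) (φ - E) hD1 hφe_one n hDv x (hmono (Nat.le_succ n) hn)
    rw [conv_sub_left] at h0
    have h0' : conv φ1 (φ - E) x = conv (S n) (φ - E) x :=
      sub_eq_zero.mp (by simpa using h0)
    rw [h0']
  -- recursion for φ1 on ker ε
  have hrec1 : ∀ x : C, Coalgebra.counit (R := ℝ) x = 0 →
      φ1 x = -P (φ x + LinearMap.mul' ℝ A (TensorProduct.map φ1 φ
        (Coalgebra.comul (R := ℝ) x - (one ⊗ₜ[ℝ] x + x ⊗ₜ[ℝ] one)))) := by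
    intro x hx
    have h1 := hφ1fix x
    rw [hEker x hx, zero_sub] at h1
    have h2 : conv φ1 (φ - E) x = conv φ1 φ x - φ1 x := by
      rw [conv_sub_right, LinearMap.sub_apply, conv_unit_right]
    have h3 : conv φ1 φ x = LinearMap.mul' ℝ A (TensorProduct.map φ1 φ
        (Coalgebra.comul (R := ℝ) x - (one ⊗ₜ[ℝ] x + x ⊗ₜ[ℝ] one))) + (φ x + φ1 x) := by
      rw [conv_expand one φ1 φ x, hφ1one, hφ, one_mul, mul_one]
    have h4 : conv φ1 (φ - E) x = φ x + LinearMap.mul' ℝ A (TensorProduct.map φ1 φ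
        (Coalgebra.comul (R := ℝ) x - (one ⊗ₜ[ℝ] x + x ⊗ₜ[ℝ] one))) := by
      rw [h2, h3]; abel
    rw [h4] at h1
    exact h1
  -- φ2
  set φ2 : C →ₗ[ℝ] A := conv φ1 φ with hφ2def
  have hφ2one : φ2 one = 1 := by
    rw [hφ2def, conv_one_apply hone_c, hφ1one, hφ, one_mul]
  have hrec2 : ∀ x : C, Coalgebra.counit (R := ℝ) x = 0 →
      φ2 x = (φ x + LinearMap.mul' ℝ A (TensorProduct.map φ1 φ
          (Coalgebra.comul (R := ℝ) x - (one ⊗ₜ[ℝ] x + x ⊗ₜ[ℝ] one)))) -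
        P (φ x + LinearMap.mul' ℝ A (TensorProduct.map φ1 φ
          (Coalgebra.comul (R := ℝ) x - (one ⊗ₜ[ℝ] x + x ⊗ₜ[ℝ] one)))) := by
    intro x hx
    have h3 : φ2 x = LinearMap.mul' ℝ A (TensorProduct.map φ1 φ
        (Coalgebra.comul (R := ℝ) x - (one ⊗ₜ[ℝ] x + x ⊗ₜ[ℝ] one))) + (φ x + φ1 x) := by
      rw [hφ2def, conv_expand one φ1 φ x, hφ1one, hφ, one_mul, mul_one]
    rw [hrec1 x hx] at h3
    rw [h3]; abel
  -- memberships
  have hPmem : ∀ a : A, P a ∈ A1 ∧ a - P a ∈ A2 := by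
    intro a
    have ha : a ∈ A1 ⊔ A2 := by rw [hcompl.sup_eq_top]; trivial
    obtain ⟨y, hy, z, hz, rfl⟩ := Submodule.mem_sup.mp ha
    constructor
    · rw [map_add, hP1 y hy, hP2 z hz, add_zero]; exact hy
    · rw [map_add, hP1 y hy, hP2 z hz, add_zero]
      simpa using hz
  have hmem12 : ∀ x : C, Coalgebra.counit (R := ℝ) x = 0 → φ1 x ∈ A1 ∧ φ2 x ∈ A2 := by
    intro x hx
    constructor
    · rw [hrec1 x hx]; exact neg_mem (hPmem _).1
    · rw [hrec2 x hx]; exact (hPmem _).2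
  -- the inverse of φ1
  set α : C →ₗ[ℝ] A := φ1 - E with hαdef
  have hαone : α one = 0 := by simp [hαdef, LinearMap.sub_apply, hφ1one, hEone]
  have hφ1split : φ1 = E + α := by rw [hαdef]; abel
  set T : ℕ → (C →ₗ[ℝ] A) := iter E (fun ψ => E - conv α ψ) with hTdef
  have hTsucc : ∀ n, T (n + 1) = E - conv α (T n) := fun n => rfl
  have hTone : ∀ n, T n one = 1 := by
    intro n; induction n with
    | zero => exact hEone
    | succ n ih =>
      rw [hTsucc]
      simp only [LinearMap.sub_apply]
      rw [conv_one_apply hone_c, hαone, zero_mul, hEone, sub_zero]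
  have hTstab : ∀ n, ∀ x ∈ F n, T (n + 1) x = T n x := by
    intro n
    induction n with
    | zero =>
      intro x hx
      obtain ⟨c, rfl⟩ := hF0elt x hx
      rw [map_smul, map_smul, hTone 1, hTone 0]
    | succ n ih =>
      intro x hx
      have hD1 : (T (n + 1) - T n) one = 0 := by simp [hTone]
      have hDv : ∀ y ∈ F n, (T (n + 1) - T n) y = 0 := by
        intro y hy; simp [ih y hy]
      have h0 := hconv0R α (T (n + 1) - T n) hαone hD1 n hDv x hx
      rw [conv_sub_right] at h0
      have h0' : conv α (T (n + 1)) x = conv α (T n) x :=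
        sub_eq_zero.mp (by simpa using h0)
      calc T (n + 1 + 1) x = E x - conv α (T (n + 1)) x := by
            rw [hTsucc (n + 1)]; simp only [LinearMap.sub_apply]
        _ = E x - conv α (T n) x := by rw [h0']
        _ = T (n + 1) x := by
            rw [hTsucc n]; simp only [LinearMap.sub_apply]
  set φ1inv : C →ₗ[ℝ] A := glue F hmono hexh T hTstab with hinvdef
  have hinveq : ∀ n, ∀ x ∈ F n, φ1inv x = T n x := fun n x hx =>
    glue_eq F hmono hexh T hTstab n x hx
  have hinvone : φ1inv one = 1 := by rw [hinveq 0 one hone0]; exact hTone 0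
  have hinvfix : conv α φ1inv = E - φ1inv := by
    ext x
    obtain ⟨n, hn⟩ := hmemF x
    have h1 : φ1inv x = T (n + 1) x := by rw [hTstab n x hn]; exact hinveq n x hn
    have hD1 : (φ1inv - T n) one = 0 := by
      simp [LinearMap.sub_apply, hinvone, hTone]
    have hDv : ∀ y ∈ F n, (φ1inv - T n) y = 0 := fun y hy => by
      simp [LinearMap.sub_apply, hinveq n y hy]
    have h0 := hconv0R α (φ1inv - T n) hαone hD1 n hDv x (hmono (Nat.le_succ n) hn)
    rw [conv_sub_right] at h0
    have h0' : conv α φ1inv x = conv α (T n) x :=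
      sub_eq_zero.mp (by simpa using h0)
    rw [LinearMap.sub_apply, h0', h1, hTsucc]
    simp only [LinearMap.sub_apply]
    abel
  have hL : conv φ1 φ1inv = E := by
    rw [hφ1split, conv_add_left, conv_unit_left, hinvfix]
    abel
  -- right-sided inverse sequence
  set T' : ℕ → (C →ₗ[ℝ] A) := iter E (fun ψ => E - conv ψ α) with hT'def
  have hT'succ : ∀ n, T' (n + 1) = E - conv (T' n) α := fun n => rfl
  have hT'one : ∀ n, T' n one = 1 := by
    intro n; induction n with
    | zero => exact hEone
    | succ n ih =>
      rw [hT'succ]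
      simp only [LinearMap.sub_apply]
      rw [conv_one_apply hone_c, hαone, mul_zero, hEone, sub_zero]
  have hT'stab : ∀ n, ∀ x ∈ F n, T' (n + 1) x = T' n x := by
    intro n
    induction n with
    | zero =>
      intro x hx
      obtain ⟨c, rfl⟩ := hF0elt x hx
      rw [map_smul, map_smul, hT'one 1, hT'one 0]
    | succ n ih =>
      intro x hx
      have hD1 : (T' (n + 1) - T' n) one = 0 := by simp [hT'one]
      have hDv : ∀ y ∈ F n, (T' (n + 1) - T' n) y = 0 := by
        intro y hy; simp [ih y hy]
      have h0 := hconv0L (T' (n + 1) - T' n) α hD1 hαone n hDv x hx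
      rw [conv_sub_left] at h0
      have h0' : conv (T' (n + 1)) α x = conv (T' n) α x :=
        sub_eq_zero.mp (by simpa using h0)
      calc T' (n + 1 + 1) x = E x - conv (T' (n + 1)) α x := by
            rw [hT'succ (n + 1)]; simp only [LinearMap.sub_apply]
        _ = E x - conv (T' n) α x := by rw [h0']
        _ = T' (n + 1) x := by
            rw [hT'succ n]; simp only [LinearMap.sub_apply]
  set L : C →ₗ[ℝ] A := glue F hmono hexh T' hT'stab with hLdef
  have hLeq : ∀ n, ∀ x ∈ F n, L x = T' n x := fun n x hx =>
    glue_eq F hmono hexh T' hT'stab n x hx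
  have hLone : L one = 1 := by rw [hLeq 0 one hone0]; exact hT'one 0
  have hLfix : conv L α = E - L := by
    ext x
    obtain ⟨n, hn⟩ := hmemF x
    have h1 : L x = T' (n + 1) x := by rw [hT'stab n x hn]; exact hLeq n x hn
    have hD1 : (L - T' n) one = 0 := by
      simp [LinearMap.sub_apply, hLone, hT'one]
    have hDv : ∀ y ∈ F n, (L - T' n) y = 0 := fun y hy => by
      simp [LinearMap.sub_apply, hLeq n y hy]
    have h0 := hconv0L (L - T' n) α hD1 hαone n hDv x (hmono (Nat.le_succ n) hn)
    rw [conv_sub_left] at h0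
    have h0' : conv L α x = conv (T' n) α x :=
      sub_eq_zero.mp (by simpa using h0)
    rw [LinearMap.sub_apply, h0', h1, hT'succ]
    simp only [LinearMap.sub_apply]
    abel
  have hR' : conv L φ1 = E := by
    rw [hφ1split, conv_add_right, conv_unit_right, hLfix]
    abel
  have hLinv : L = φ1inv := by
    calc L = conv L E := (conv_unit_right L).symm
      _ = conv L (conv φ1 φ1inv) := by rw [hL]
      _ = conv (conv L φ1) φ1inv := (conv_assoc _ _ _).symm
      _ = conv E φ1inv := by rw [hR']
      _ = φ1inv := conv_unit_left φ1inv
  have hR : conv φ1inv φ1 = E := by rw [← hLinv]; exact hR'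
  have hfact : φ = conv φ1inv φ2 := by
    rw [hφ2def]
    calc φ = conv E φ := (conv_unit_left φ).symm
      _ = conv (conv φ1inv φ1) φ := by rw [hR]
      _ = conv φ1inv (conv φ1 φ) := conv_assoc _ _ _
  refine ⟨φ1, φ2, hφ1one, hφ2one, hrec1, hrec2, hmem12, ⟨φ1inv, hL, hR, hfact⟩, ?_⟩
  -- uniqueness
  rintro ψ1 ψ2 hψ1one hψ2one hmemψ ⟨ψinv, hψL, hψR, hφf⟩
  have hψ2eq : ψ2 = conv ψ1 φ := by
    calc ψ2 = conv E ψ2 := (conv_unit_left ψ2).symm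
      _ = conv (conv ψ1 ψinv) ψ2 := by rw [hψL]
      _ = conv ψ1 (conv ψinv ψ2) := conv_assoc _ _ _
      _ = conv ψ1 φ := by rw [← hφf]
  have hrecψ : ∀ x : C, Coalgebra.counit (R := ℝ) x = 0 →
      ψ1 x = -P (φ x + LinearMap.mul' ℝ A (TensorProduct.map ψ1 φ
        (Coalgebra.comul (R := ℝ) x - (one ⊗ₜ[ℝ] x + x ⊗ₜ[ℝ] one)))) := by
    intro x hx
    have h3 : ψ2 x = LinearMap.mul' ℝ A (TensorProduct.map ψ1 φ
        (Coalgebra.comul (R := ℝ) x - (one ⊗ₜ[ℝ] x + x ⊗ₜ[ℝ] one))) + (φ x + ψ1 x) := by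
      rw [hψ2eq]
      rw [conv_expand one ψ1 φ x, hψ1one, hφ, one_mul, mul_one]
    have hP2x : P (ψ2 x) = 0 := hP2 _ (hmemψ x hx).2
    have hP1x : P (ψ1 x) = ψ1 x := hP1 _ (hmemψ x hx).1
    have h4 := congrArg P h3
    rw [hP2x, map_add, map_add, hP1x] at h4
    set B := LinearMap.mul' ℝ A (TensorProduct.map ψ1 φ
        (Coalgebra.comul (R := ℝ) x - (one ⊗ₜ[ℝ] x + x ⊗ₜ[ℝ] one))) with hBdef
    have h5 : (P B + P (φ x)) + ψ1 x = 0 := by rw [add_assoc]; exact h4.symm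
    have h6 : ψ1 x = -(P B + P (φ x)) := eq_neg_of_add_eq_zero_right h5
    rw [map_add, h6]
    abel
  have heq1 : ∀ n, ∀ x ∈ F n, ψ1 x = φ1 x := by
    intro n
    induction n with
    | zero =>
      intro x hx
      obtain ⟨c, rfl⟩ := hF0elt x hx
      rw [map_smul, map_smul, hψ1one, hφ1one]
    | succ n ih =>
      intro x hx
      set x0 := x - (Coalgebra.counit (R := ℝ) x) • one with hx0def
      have hx0F : x0 ∈ F (n + 1) := sub_mem hx (Submodule.smul_mem _ _ (honeN (n + 1)))
      have hx0e : Coalgebra.counit (R := ℝ) x0 = 0 := by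
        rw [hx0def, map_sub, map_smul, hone_e, smul_eq_mul, mul_one, sub_self]
      have hB : TensorProduct.map ψ1 φ
            (Coalgebra.comul (R := ℝ) x0 - (one ⊗ₜ[ℝ] x0 + x0 ⊗ₜ[ℝ] one))
          = TensorProduct.map φ1 φ
            (Coalgebra.comul (R := ℝ) x0 - (one ⊗ₜ[ℝ] x0 + x0 ⊗ₜ[ℝ] one)) := by
        obtain ⟨t, ht⟩ := hconil n x0 hx0F
        rw [← ht]
        have e1 : TensorProduct.map ψ1 φ
            (TensorProduct.map (F n).subtype (F n).subtype t)
            = TensorProduct.map (ψ1 ∘ₗ (F n).subtype) (φ ∘ₗ (F n).subtype) t := by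
          rw [TensorProduct.map_comp]; rfl
        have e2 : TensorProduct.map φ1 φ
            (TensorProduct.map (F n).subtype (F n).subtype t)
            = TensorProduct.map (φ1 ∘ₗ (F n).subtype) (φ ∘ₗ (F n).subtype) t := by
          rw [TensorProduct.map_comp]; rfl
        rw [e1, e2]
        have hcomp : ψ1 ∘ₗ (F n).subtype = φ1 ∘ₗ (F n).subtype :=
          LinearMap.ext fun y => ih y y.2
        rw [hcomp]
      have h12 : ψ1 x0 = φ1 x0 := by
        rw [hrecψ x0 hx0e, hrec1 x0 hx0e, hB]
      have hxsplit : x = x0 + (Coalgebra.counit (R := ℝ) x) • one := by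
        rw [hx0def]; abel
      rw [hxsplit, map_add, map_add, map_smul, map_smul, hψ1one, hφ1one, h12]
  have hψ1eq : ψ1 = φ1 := LinearMap.ext fun x => by
    obtain ⟨n, hn⟩ := hmemF x; exact heq1 n x hn
  exact ⟨hψ1eq, by rw [hψ2eq, hψ1eq, ← hφ2def]⟩
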